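/- Let P be an orthogonal projection and U a unitary on a Hilbert space F with dim F < ∞. If (z₁, z₂) with z₁z₂ ≠ 0 is a joint eigenvalue of ((P^⊥ + z₁z₂P)U, U*(P + z₁z₂P^⊥)), then (1/z̄₁, 1/z̄₂) is a joint eigenvalue of ((P^⊥ + (1/z̄₁z̄₂)P)U, U*(P + (1/z̄₁z̄₂)P^⊥)). -/

import Mathlib

open ContinuousLinearMap

private lemma proj_aux1 {R : Type*} [Ring R] [Algebra ℂ R] (p : R) (hp : p * p = p)
    (c : ℂ) (hc : c ≠ 0) : ((1 - p) + c⁻¹ • p) * ((1 - p) + c • p) = 1 := by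
  have h0 : p * (1 - p) = 0 := by rw [mul_sub, mul_one, hp, sub_self]
  have h0' : (1 - p) * p = 0 := by rw [sub_mul, one_mul, hp, sub_self]
  have h1 : (1 - p) * (1 - p) = 1 - p := by rw [mul_sub, mul_one, h0', sub_zero]
  simp only [add_mul, mul_add, smul_mul_assoc, mul_smul_comm, smul_smul, h0, h0', h1, hp,
    smul_zero, add_zero, zero_add, inv_mul_cancel₀ hc, mul_inv_cancel₀ hc, one_smul, neg_smul]
  abel

private lemma proj_aux2 {R : Type*} [Ring R] [Algebra ℂ R] (p : R) (hp : p * p = p)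
    (c : ℂ) : (p + c⁻¹ • (1 - p)) * ((1 - p) + c⁻¹ • p) = c⁻¹ • 1 := by
  have h0 : p * (1 - p) = 0 := by rw [mul_sub, mul_one, hp, sub_self]
  have h0' : (1 - p) * p = 0 := by rw [sub_mul, one_mul, hp, sub_self]
  have h1 : (1 - p) * (1 - p) = 1 - p := by rw [mul_sub, mul_one, h0', sub_zero]
  simp only [add_mul, mul_add, smul_mul_assoc, mul_smul_comm, smul_smul, h0, h0', h1, hp,
    smul_zero, add_zero, zero_add]
  rw [← smul_add]
  congr 1
  abel

set_option maxHeartbeats 2000000 in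
/-- Symmetry of the variety `W_{P,U}`: if `(z₁, z₂)` with `z₁z₂ ≠ 0` is a joint
eigenvalue of `((P^⊥ + z₁z₂P)U, U*(P + z₁z₂P^⊥))`, then `(1/z̄₁, 1/z̄₂)` is a joint
eigenvalue of `((P^⊥ + (1/(z̄₁z̄₂))P)U, U*(P + (1/(z̄₁z̄₂))P^⊥))`. -/
theorem joint_eigenvalue_symmetry {n : ℕ}
    (P U : EuclideanSpace ℂ (Fin n) →L[ℂ] EuclideanSpace ℂ (Fin n))
    (hP : IsSelfAdjoint P) (hP2 : P ∘L P = P)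
    (hU1 : adjoint U ∘L U = 1) (hU2 : U ∘L adjoint U = 1)
    (z₁ z₂ : ℂ) (hz : z₁ * z₂ ≠ 0)
    (v : EuclideanSpace ℂ (Fin n)) (hv : v ≠ 0)
    (h1 : (((1 - P) + (z₁ * z₂) • P) ∘L U) v = z₁ • v)
    (h2 : (adjoint U ∘L (P + (z₁ * z₂) • (1 - P))) v = z₂ • v) :
    ∃ w : EuclideanSpace ℂ (Fin n), w ≠ 0 ∧
      (((1 - P) + ((starRingEnd ℂ z₁ * starRingEnd ℂ z₂)⁻¹) • P) ∘L U) w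
        = (starRingEnd ℂ z₁)⁻¹ • w ∧
      (adjoint U ∘L (P + ((starRingEnd ℂ z₁ * starRingEnd ℂ z₂)⁻¹) • (1 - P))) w
        = (starRingEnd ℂ z₂)⁻¹ • w := by
  set c : ℂ := starRingEnd ℂ z₁ * starRingEnd ℂ z₂ with hcdef
  have hz₁ : z₁ ≠ 0 := left_ne_zero_of_mul hz
  have hz₂ : z₂ ≠ 0 := right_ne_zero_of_mul hz
  have hcz₁ : starRingEnd ℂ z₁ ≠ 0 := by simpa using hz₁
  have hcz₂ : starRingEnd ℂ z₂ ≠ 0 := by simpa using hz₂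
  have hc : c ≠ 0 := mul_ne_zero hcz₁ hcz₂
  have hP2' : P * P = P := hP2
  have hU1' : adjoint U * U = 1 := hU1
  have hU2' : U * adjoint U = 1 := hU2
  -- adjoint of the first operator
  have hadjA : adjoint (((1 - P) + (z₁ * z₂) • P) ∘L U)
      = adjoint U * ((1 - P) + c • P) := by
    rw [adjoint_comp, mul_def]
    congr 1
    rw [← star_eq_adjoint]
    simp [star_add, star_sub, star_smul, hP.star_eq, hcdef, Complex.star_def, map_mul,
      mul_comm]
  -- existence of an eigenvector of `adjoint A` with eigenvalue `conj z₁`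
  obtain ⟨w, hw0, hw⟩ :
      ∃ w, w ≠ 0 ∧ (adjoint U * ((1 - P) + c • P)) w = starRingEnd ℂ z₁ • w := by
    set T : EuclideanSpace ℂ (Fin n) →L[ℂ] EuclideanSpace ℂ (Fin n) :=
      (((1 - P) + (z₁ * z₂) • P) ∘L U) - z₁ • 1 with hTdef
    have hTv : T v = 0 := by
      rw [hTdef, sub_apply, h1, smul_apply, one_apply_eq_self, sub_self]
    have hnotinj : ¬ Function.Injective T := by
      intro h
      exact hv (by simpa using h (by simpa using hTv : T v = T 0))
    have hnotsurj : ¬ Function.Surjective T := fun h =>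
      hnotinj (LinearMap.injective_iff_surjective.mpr h)
    have horth : (LinearMap.range (T : EuclideanSpace ℂ (Fin n) →ₗ[ℂ]
        EuclideanSpace ℂ (Fin n)))ᗮ ≠ ⊥ := by
      intro h
      exact hnotsurj (LinearMap.range_eq_top.mp
        (Submodule.orthogonal_eq_bot_iff.mp h))
    obtain ⟨w, hwmem, hw0⟩ := Submodule.exists_mem_ne_zero_of_ne_bot horth
    refine ⟨w, hw0, ?_⟩
    have hTw : adjoint T w = 0 := by
      rw [← inner_self_eq_zero (𝕜 := ℂ), adjoint_inner_right]
      exact hwmem _ ⟨adjoint T w, rfl⟩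
    have hadjT : adjoint T = adjoint U * ((1 - P) + c • P) - starRingEnd ℂ z₁ • 1 := by
      rw [hTdef, ← star_eq_adjoint, star_sub, star_smul, star_one, star_eq_adjoint,
        Complex.star_def, hadjA]
    rw [hadjT] at hTw
    have := sub_eq_zero.mp hTw
    simpa using this
  -- the two key algebraic identities
  have key1 : (((1 - P) + c⁻¹ • P) * U) * (adjoint U * ((1 - P) + c • P)) = 1 := by
    rw [mul_assoc, ← mul_assoc U, hU2', one_mul]
    exact proj_aux1 P hP2' c hc
  have key2 : (adjoint U * (P + c⁻¹ • (1 - P))) * (((1 - P) + c⁻¹ • P) * U)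
      = c⁻¹ • 1 := by
    rw [mul_assoc, ← mul_assoc (P + c⁻¹ • (1 - P)), proj_aux2 P hP2' c,
      smul_mul_assoc, one_mul, mul_smul_comm, hU1']
  -- conclusion
  have e1 : (((1 - P) + c⁻¹ • P) * U) w = (starRingEnd ℂ z₁)⁻¹ • w := by
    have h : ((((1 - P) + c⁻¹ • P) * U) * (adjoint U * ((1 - P) + c • P))) w = w := by
      rw [key1, one_apply_eq_self]
    rw [mul_apply_eq_comp, hw, map_smul] at h
    have h' := congrArg (fun x => (starRingEnd ℂ z₁)⁻¹ • x) h
    simp only [smul_smul, inv_mul_cancel₀ hcz₁, one_smul] at h'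
    exact h'
  have e2 : (adjoint U * (P + c⁻¹ • (1 - P))) w = (starRingEnd ℂ z₂)⁻¹ • w := by
    have h : ((adjoint U * (P + c⁻¹ • (1 - P))) * (((1 - P) + c⁻¹ • P) * U)) w
        = c⁻¹ • w := by rw [key2, smul_apply, one_apply_eq_self]
    rw [mul_apply_eq_comp, e1, map_smul] at h
    have h' := congrArg (fun x => starRingEnd ℂ z₁ • x) h
    simp only [smul_smul, mul_inv_cancel₀ hcz₁, one_smul] at h'
    rw [h', hcdef, mul_inv, ← mul_assoc, mul_inv_cancel₀ hcz₁, one_mul]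
  exact ⟨w, hw0, e1, e2⟩
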